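/- Let p > k ≥ 2 with p prime. There exists a set S ⊆ Z/pZ with |S| ≤ ⌈p·ln(p)/(k-1)⌉ such that for every g ∈ Z/pZ there exist i ∈ {0,1,...,k-1} and j ∈ S with i·j = g (mod p). -/
import Mathlib

open Finset

theorem stmt7 (p k : ℕ) (hp : p.Prime) (hk : 2 ≤ k) (hkp : k < p) :
    ∃ S : Finset (ZMod p),
      S.card ≤ ⌈(p : ℝ) * Real.log p / ((k : ℝ) - 1)⌉₊ ∧
      ∀ g : ZMod p, ∃ i : ℕ, i ≤ k - 1 ∧ ∃ j ∈ S, (i : ZMod p) * j = g := by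
  haveI : Fact p.Prime := ⟨hp⟩
  have hp3 : 3 ≤ p := by omega
  set A : ZMod p → Finset (ZMod p) :=
    fun j => (Finset.Icc 1 (k-1)).image (fun i : ℕ => (i : ZMod p) * j) with hA
  set J : Finset (ZMod p) := Finset.univ \ {0} with hJdef
  -- cast of i ∈ Icc 1 (k-1) is nonzero
  have hcast : ∀ i ∈ Finset.Icc 1 (k-1), ((i : ZMod p)).val = i := by
    intro i hi
    simp only [Finset.mem_Icc] at hi
    exact ZMod.val_cast_of_lt (by omega)
  have hcastne : ∀ i ∈ Finset.Icc 1 (k-1), (i : ZMod p) ≠ 0 := by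
    intro i hi h
    have h2 := hcast i hi
    rw [h, ZMod.val_zero] at h2
    simp only [Finset.mem_Icc] at hi
    omega
  have hJcard : J.card = p - 1 := by
    rw [hJdef, Finset.card_sdiff_of_subset (Finset.subset_univ _), Finset.card_singleton,
      Finset.card_univ, ZMod.card]
  have hJne : J.Nonempty := ⟨1, by simp [hJdef]⟩
  -- counting: for g ≠ 0, the number of j ∈ J covering g is k - 1
  have hfilter : ∀ g : ZMod p, g ≠ 0 →
      (J.filter (fun j => g ∈ A j)).card = k - 1 := by
    intro g hg
    have himg : J.filter (fun j => g ∈ A j)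
        = (Finset.Icc 1 (k-1)).image (fun i : ℕ => ((i : ZMod p))⁻¹ * g) := by
      ext j
      simp only [Finset.mem_filter, hJdef, Finset.mem_sdiff, Finset.mem_univ,
        Finset.mem_singleton, true_and, hA, Finset.mem_image]
      constructor
      · rintro ⟨hj0, i, hi, hij⟩
        refine ⟨i, hi, ?_⟩
        have hine := hcastne i hi
        rw [← hij, inv_mul_cancel_left₀ hine]
      · rintro ⟨i, hi, hij⟩
        have hine := hcastne i hi
        constructor
        · rw [← hij]
          exact mul_ne_zero (inv_ne_zero hine) hg
        · exact ⟨i, hi, by rw [← hij, mul_inv_cancel_left₀ hine]⟩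
    have hinj : Set.InjOn (fun i : ℕ => ((i : ZMod p))⁻¹ * g) (Finset.Icc 1 (k-1)) := by
      intro a ha b hb hab
      have : (a : ZMod p) = (b : ZMod p) := by
        have := mul_right_cancel₀ hg hab
        exact inv_injective this
      have h1 := hcast a ha
      have h2 := hcast b hb
      rw [this] at h1
      omega
    rw [himg, Finset.card_image_of_injOn hinj, Nat.card_Icc]
    omega
  -- double counting sum
  have hsum : ∀ U : Finset (ZMod p), U ⊆ J →
      ∑ j ∈ J, (U ∩ A j).card = U.card * (k - 1) := by
    intro U hU
    have h1 : ∀ j, (U ∩ A j).card = ∑ g ∈ U, if g ∈ A j then 1 else 0 := by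
      intro j
      rw [← Finset.filter_mem_eq_inter, Finset.card_filter]
    simp only [h1]
    rw [Finset.sum_comm]
    have h2 : ∀ g ∈ U, (∑ j ∈ J, if g ∈ A j then 1 else 0) = k - 1 := by
      intro g hg
      rw [← Finset.card_filter]
      exact hfilter g (by have := hU hg; simp [hJdef] at this; exact this)
    rw [Finset.sum_congr rfl h2, Finset.sum_const, smul_eq_mul]
  -- real parameters
  have hK : (1:ℝ) ≤ (k:ℝ) - 1 := by
    have : (2:ℝ) ≤ (k:ℝ) := by exact_mod_cast hk
    linarith
  have hP : (2:ℝ) ≤ (p:ℝ) - 1 := by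
    have : (3:ℝ) ≤ (p:ℝ) := by exact_mod_cast hp3
    linarith
  have hKP : (k:ℝ) - 1 < (p:ℝ) - 1 := by
    have : (k:ℝ) < (p:ℝ) := by exact_mod_cast hkp
    linarith
  set r : ℝ := 1 - ((k:ℝ)-1)/((p:ℝ)-1) with hrdef
  have hr0 : 0 ≤ r := by
    rw [hrdef]
    have : ((k:ℝ)-1)/((p:ℝ)-1) ≤ 1 := by
      rw [div_le_one (by linarith)]; linarith
    linarith
  -- greedy induction
  have main : ∀ t : ℕ, ∃ S : Finset (ZMod p), S.card ≤ t ∧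
      ((J \ S.biUnion A).card : ℝ) ≤ ((p:ℝ) - 1) * r ^ t := by
    intro t
    induction t with
    | zero =>
      refine ⟨∅, le_refl _, ?_⟩
      simp only [Finset.biUnion_empty, Finset.sdiff_empty, pow_zero, mul_one, hJcard]
      rw [Nat.cast_sub (by omega), Nat.cast_one]
    | succ t ih =>
      obtain ⟨S, hScard, hU⟩ := ih
      set U : Finset (ZMod p) := J \ S.biUnion A with hUdef
      have hUJ : U ⊆ J := Finset.sdiff_subset
      -- averaging: pick best j
      have havg : ∑ j ∈ J, U.card * (k-1) ≤ ∑ j ∈ J, (p-1) * (U ∩ A j).card := by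
        rw [Finset.sum_const, smul_eq_mul, ← Finset.mul_sum, hsum U hUJ, hJcard]
      obtain ⟨j, hjJ, hjbest⟩ := Finset.exists_le_of_sum_le hJne havg
      refine ⟨insert j S, le_trans (Finset.card_insert_le _ _) (by omega), ?_⟩
      have hU' : J \ (insert j S).biUnion A = U \ A j := by
        rw [Finset.biUnion_insert, hUdef]
        ext x
        simp only [Finset.mem_sdiff, Finset.mem_union]
        tauto
      rw [hU']
      have hcard : (U \ A j).card = U.card - (U ∩ A j).card := by
        rw [← Finset.sdiff_inter_self_left,
          Finset.card_sdiff_of_subset Finset.inter_subset_left]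
      rw [hcard]
      set c : ℕ := (U ∩ A j).card with hcdef
      have hcle : c ≤ U.card := Finset.card_le_card Finset.inter_subset_left
      have hbestR : (U.card : ℝ) * ((k:ℝ)-1) ≤ ((p:ℝ)-1) * (c : ℝ) := by
        have := hjbest
        have hcast2 : ((U.card * (k-1) : ℕ) : ℝ) ≤ (((p-1) * c : ℕ) : ℝ) := by
          exact_mod_cast this
        push_cast [Nat.cast_sub (by omega : 1 ≤ k), Nat.cast_sub (by omega : 1 ≤ p)] at hcast2
        convert hcast2 using 2 <;> push_cast <;> ring_nf
      rw [Nat.cast_sub hcle]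
      have hc' : (U.card:ℝ) * ((k:ℝ)-1) / ((p:ℝ)-1) ≤ (c:ℝ) := by
        rw [div_le_iff₀ (by linarith)]
        linarith [hbestR]
      have h1 : (U.card:ℝ) - (c:ℝ) ≤ (U.card:ℝ) * r := by
        have hexp : (U.card:ℝ) * r
            = (U.card:ℝ) - (U.card:ℝ) * ((k:ℝ)-1) / ((p:ℝ)-1) := by
          rw [hrdef]; ring
        rw [hexp]
        linarith
      have h2 : (U.card:ℝ) * r ≤ (((p:ℝ)-1) * r ^ t) * r :=
        mul_le_mul_of_nonneg_right hU hr0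
      calc (U.card:ℝ) - (c:ℝ) ≤ (U.card:ℝ) * r := h1
        _ ≤ (((p:ℝ)-1) * r ^ t) * r := h2
        _ = ((p:ℝ)-1) * r ^ (t+1) := by ring
  -- the analytic bound at T
  set T : ℕ := ⌈(p : ℝ) * Real.log p / ((k : ℝ) - 1)⌉₊ with hTdef
  obtain ⟨S, hScard, hSbound⟩ := main T
  have hPpos : (0:ℝ) < (p:ℝ) - 1 := by linarith
  have hKpos : (0:ℝ) < (k:ℝ) - 1 := by linarith
  have hlogp : 0 < Real.log p := Real.log_pos (by exact_mod_cast (by omega : 1 < p))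
  have hTlarge : ((p:ℝ)-1) * Real.log ((p:ℝ)-1) < (T:ℝ) * ((k:ℝ)-1) := by
    have h1 : (p : ℝ) * Real.log p / ((k : ℝ) - 1) ≤ (T:ℝ) := Nat.le_ceil _
    have h2 : ((p:ℝ)-1) * Real.log ((p:ℝ)-1) < (p:ℝ) * Real.log (p:ℝ) := by
      have hl : Real.log ((p:ℝ)-1) < Real.log (p:ℝ) :=
        Real.log_lt_log (by linarith) (by linarith)
      have hl0 : 0 ≤ Real.log ((p:ℝ)-1) := Real.log_nonneg (by linarith)
      nlinarith
    have h3 : (p : ℝ) * Real.log p ≤ (T:ℝ) * ((k:ℝ)-1) := by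
      rw [div_le_iff₀ hKpos] at h1
      linarith
    linarith
  have hfin : ((p:ℝ)-1) * r ^ T < 1 := by
    have hre : r ≤ Real.exp (-(((k:ℝ)-1)/((p:ℝ)-1))) := by
      have := Real.add_one_le_exp (-(((k:ℝ)-1)/((p:ℝ)-1)))
      rw [hrdef]; linarith
    have hrT : r ^ T ≤ Real.exp (-(((k:ℝ)-1)/((p:ℝ)-1))) ^ T :=
      pow_le_pow_left₀ hr0 hre T
    have hexpT : Real.exp (-(((k:ℝ)-1)/((p:ℝ)-1))) ^ T
        = Real.exp ((T:ℝ) * -(((k:ℝ)-1)/((p:ℝ)-1))) := by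
      rw [← Real.exp_nat_mul]
    have hkey : Real.exp ((T:ℝ) * -(((k:ℝ)-1)/((p:ℝ)-1))) < ((p:ℝ)-1)⁻¹ := by
      rw [← Real.exp_log (inv_pos.mpr hPpos), Real.log_inv]
      apply Real.exp_lt_exp.mpr
      have hq : Real.log ((p:ℝ)-1) < (T:ℝ) * (((k:ℝ)-1)/((p:ℝ)-1)) := by
        rw [mul_div_assoc'] at *
        rw [lt_div_iff₀ hPpos]
        nlinarith [hTlarge]
      have he : (T:ℝ) * -(((k:ℝ)-1)/((p:ℝ)-1)) = -((T:ℝ) * (((k:ℝ)-1)/((p:ℝ)-1))) := by ring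
      rw [he]
      linarith [hq]
    calc ((p:ℝ)-1) * r ^ T ≤ ((p:ℝ)-1) * Real.exp ((T:ℝ) * -(((k:ℝ)-1)/((p:ℝ)-1))) := by
          apply mul_le_mul_of_nonneg_left _ (le_of_lt hPpos)
          rw [← hexpT]; exact hrT
      _ < ((p:ℝ)-1) * ((p:ℝ)-1)⁻¹ := by
          exact mul_lt_mul_of_pos_left hkey hPpos
      _ = 1 := mul_inv_cancel₀ (ne_of_gt hPpos)
  have hempty : J \ S.biUnion A = ∅ := by
    rw [← Finset.card_eq_zero]
    by_contra h
    have h1 : 1 ≤ (J \ S.biUnion A).card := Nat.one_le_iff_ne_zero.mpr h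
    have : (1:ℝ) ≤ ((J \ S.biUnion A).card : ℝ) := by exact_mod_cast h1
    linarith
  have hcover : J ⊆ S.biUnion A := by
    rwa [← Finset.sdiff_eq_empty_iff_subset]
  refine ⟨S, hScard, ?_⟩
  intro g
  by_cases hg : g = 0
  · -- g = 0 : use i = 0; need S nonempty
    have h1 : (1 : ZMod p) ∈ S.biUnion A := hcover (by simp [hJdef])
    rw [Finset.mem_biUnion] at h1
    obtain ⟨j, hjS, -⟩ := h1
    exact ⟨0, by omega, j, hjS, by simp [hg]⟩
  · have h1 : g ∈ S.biUnion A := hcover (by simp [hJdef, hg])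
    rw [Finset.mem_biUnion] at h1
    obtain ⟨j, hjS, hgj⟩ := h1
    rw [hA] at hgj
    simp only [Finset.mem_image, Finset.mem_Icc] at hgj
    obtain ⟨i, hi, hij⟩ := hgj
    exact ⟨i, hi.2, j, hjS, hij⟩
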